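/- If err(h, h', X) ≤ ε₁ and err(h, h', X_cf) ≤ ε₂, where X_cf is the counterfactual distribution, then the causal influences satisfy |ι(h) - ι(h')| ≤ ε₁ + ε₂. -/
import Mathlib


open Finset

/-- Probability of an event under weights `p` on a finite space. -/
noncomputable def Pr {Ω : Type*} [Fintype Ω] (p : Ω → ℝ) (E : Ω → Prop) [DecidablePred E] : ℝ :=
  ∑ ω, if E ω then p ω else 0

/-- Theorem 2: if `err(h,h',X) ≤ ε₁` and `err(h,h',X_cf) ≤ ε₂` then
`|ι(h) - ι(h')| ≤ ε₁ + ε₂`. -/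
theorem relating_counterfactual_and_true_accuracies {Ω 𝒳 : Type*} [Fintype Ω]
    (p : Ω → ℝ) (hp : ∀ ω, 0 ≤ p ω) (hsum : ∑ ω, p ω = 1)
    (X Xcf : Ω → 𝒳) (h h' : 𝒳 → Bool) (ε₁ ε₂ : ℝ)
    (herr1 : Pr p (fun ω => h (X ω) ≠ h' (X ω)) ≤ ε₁)
    (herr2 : Pr p (fun ω => h (Xcf ω) ≠ h' (Xcf ω)) ≤ ε₂) :
    |Pr p (fun ω => h (X ω) ≠ h (Xcf ω)) - Pr p (fun ω => h' (X ω) ≠ h' (Xcf ω))|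
      ≤ ε₁ + ε₂ := by
  unfold Pr at *
  rw [← Finset.sum_sub_distrib]
  calc |∑ ω, ((if h (X ω) ≠ h (Xcf ω) then p ω else 0) -
        (if h' (X ω) ≠ h' (Xcf ω) then p ω else 0))|
      ≤ ∑ ω, |(if h (X ω) ≠ h (Xcf ω) then p ω else 0) -
        (if h' (X ω) ≠ h' (Xcf ω) then p ω else 0)| := Finset.abs_sum_le_sum_abs _ _
    _ ≤ ∑ ω, ((if h (X ω) ≠ h' (X ω) then p ω else 0) +
        (if h (Xcf ω) ≠ h' (Xcf ω) then p ω else 0)) := by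
        apply Finset.sum_le_sum
        intro ω _
        have := hp ω
        rcases Bool.eq_false_or_eq_true (h (X ω)) with h1 | h1 <;>
          rcases Bool.eq_false_or_eq_true (h (Xcf ω)) with h2 | h2 <;>
          rcases Bool.eq_false_or_eq_true (h' (X ω)) with h3 | h3 <;>
          rcases Bool.eq_false_or_eq_true (h' (Xcf ω)) with h4 | h4 <;>
          simp [h1, h2, h3, h4, abs_le] <;> linarith
    _ = (∑ ω, if h (X ω) ≠ h' (X ω) then p ω else 0) +
        ∑ ω, if h (Xcf ω) ≠ h' (Xcf ω) then p ω else 0 := Finset.sum_add_distrib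
    _ ≤ ε₁ + ε₂ := add_le_add herr1 herr2
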